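/- The ternary quintic x y z³ − 2y²z³ − (1/5)z⁵ ∈ ℂ[x,y,z] has Waring rank exactly 8. -/

import Mathlib

open MvPolynomial

/-- The iterated partial derivative `∂^m` applied to `F`: on a monomial `x^k` it gives
`(∏ᵢ kᵢ(kᵢ-1)⋯(kᵢ-mᵢ+1)) · x^(k-m)`, i.e. each dual variable `αᵢ` acts as `∂/∂xᵢ`. -/
noncomputable def mderiv {σ : Type*} (m : σ →₀ ℕ) (F : MvPolynomial σ ℂ) :
    MvPolynomial σ ℂ :=
  (AddMonoidAlgebra.coeff F).sum fun k c =>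
    MvPolynomial.monomial (k - m) (c * ∏ i ∈ m.support, (Nat.descFactorial (k i) (m i) : ℂ))

/-- The apolarity action `Θ ∘ F` of a polynomial `Θ` in the dual variables on `F`,
as a constant-coefficient differential operator. -/
noncomputable def diffOp {σ : Type*} (Θ F : MvPolynomial σ ℂ) : MvPolynomial σ ℂ :=
  (AddMonoidAlgebra.coeff Θ).sum fun m c => c • mderiv m F

/-- Apolar length `al F`: the dimension of the space `Diff(F) = {Θ ∘ F : Θ ∈ T}` of all
partial derivatives of `F` of all orders (including `F` itself). -/
noncomputable def apolarLength {σ : Type*} (F : MvPolynomial σ ℂ) : ℕ :=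
  Module.finrank ℂ (Submodule.span ℂ (Set.range fun Θ => diffOp Θ F))

/-- The Hilbert function of the apolar algebra of `F`: the dimension of the span of the
`i`-th order partial derivatives `{Θ ∘ F : Θ homogeneous of degree i}`. -/
noncomputable def hilbFn {σ : Type*} (F : MvPolynomial σ ℂ) (i : ℕ) : ℕ :=
  Module.finrank ℂ (Submodule.span ℂ
    {G : MvPolynomial σ ℂ | ∃ Θ : MvPolynomial σ ℂ, Θ.IsHomogeneous i ∧ diffOp Θ F = G})

/-- Waring rank of a degree-`d` form: the least `r` such that
`F = c₁ ℓ₁^d + ⋯ + c_r ℓ_r^d` for linear forms `ℓᵢ` and scalars `cᵢ ∈ ℂ`. -/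
noncomputable def waringRank {σ : Type*} [Fintype σ] (d : ℕ) (F : MvPolynomial σ ℂ) : ℕ :=
  sInf {r : ℕ | ∃ (c : Fin r → ℂ) (v : Fin r → σ → ℂ),
    F = ∑ i, c i • (∑ j, v i j • MvPolynomial.X j) ^ d}

namespace W15

def dot (u w : Fin 3 → ℂ) : ℂ := u 0 * w 0 + u 1 * w 1 + u 2 * w 2

noncomputable def lf (v : Fin 3 → ℂ) : MvPolynomial (Fin 3) ℂ := ∑ j, v j • X j

noncomputable def Fq : MvPolynomial (Fin 3) ℂ :=
  X 0 * X 1 * X 2 ^ 3 - 2 * X 1 ^ 2 * X 2 ^ 3 - C (1/5 : ℂ) * X 2 ^ 5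

lemma eval_lf (v P : Fin 3 → ℂ) : eval P (lf v) = dot v P := by
  simp [lf, dot, Fin.sum_univ_succ, smul_eq_C_mul]; ring

lemma pderiv0_lf (v : Fin 3 → ℂ) : pderiv 0 (lf v) = C (v 0) := by
  simp [lf, Fin.sum_univ_succ, smul_eq_C_mul, pderiv_C_mul]

lemma lf_zero : lf 0 = 0 := by simp [lf]

lemma lf_smul (t : ℂ) (v : Fin 3 → ℂ) : lf (t • v) = t • lf v := by
  simp [lf, Finset.smul_sum, Pi.smul_apply, mul_smul]

lemma dot_add_right (v P Q : Fin 3 → ℂ) : dot v (P + Q) = dot v P + dot v Q := by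
  simp [dot, Pi.add_apply]; ring

def cross (u w : Fin 3 → ℂ) : Fin 3 → ℂ :=
  ![u 1 * w 2 - u 2 * w 1, u 2 * w 0 - u 0 * w 2, u 0 * w 1 - u 1 * w 0]

lemma dot_cross_left (u w : Fin 3 → ℂ) : dot u (cross u w) = 0 := by
  simp [dot, cross]; ring

lemma dot_cross_right (u w : Fin 3 → ℂ) : dot w (cross u w) = 0 := by
  simp [dot, cross]; ring

lemma tri_perm (p q r : Fin 3 → ℂ) : dot r (cross p q) = dot p (cross q r) := by
  simp [dot, cross]; ring

def ek (k : Fin 3) : Fin 3 → ℂ := fun j => if j = k then 1 else 0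

lemma dot_ek (v : Fin 3 → ℂ) (k : Fin 3) : dot v (ek k) = v k := by
  fin_cases k <;> simp [dot, ek, Fin.ext_iff]

lemma dot_cross_ek (a b : Fin 3 → ℂ) (k : Fin 3) :
    dot b (cross a (ek k)) = -(cross a b) k := by
  fin_cases k <;> simp [dot, cross, ek, Fin.ext_iff] <;> ring

lemma ne_zero_coord {u : Fin 3 → ℂ} (hu : u ≠ 0) : u 0 ≠ 0 ∨ u 1 ≠ 0 ∨ u 2 ≠ 0 := by
  by_contra hc
  push_neg at hc
  exact hu (by funext i; fin_cases i <;> simp [hc.1, hc.2.1, hc.2.2])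

lemma parallel_of_cross_eq_zero {u w : Fin 3 → ℂ} (h : cross u w = 0) (hu : u ≠ 0) :
    ∃ t : ℂ, w = t • u := by
  have h0 := congrFun h 0
  have h1 := congrFun h 1
  have h2 := congrFun h 2
  simp [cross] at h0 h1 h2
  have key : ∀ t : ℂ, w 0 = t * u 0 → w 1 = t * u 1 → w 2 = t * u 2 → ∃ t : ℂ, w = t • u := by
    intro t e0 e1 e2
    exact ⟨t, funext fun i => by fin_cases i <;> simpa [Pi.smul_apply]⟩
  rcases ne_zero_coord hu with h | h | h
  · refine key (w 0 / u 0) (by field_simp) ?_ ?_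
    · field_simp; linear_combination h2
    · field_simp; linear_combination -h1
  · refine key (w 1 / u 1) ?_ (by field_simp) ?_
    · field_simp; linear_combination -h2
    · field_simp; linear_combination h0
  · refine key (w 2 / u 2) ?_ ?_ (by field_simp)
    · field_simp; linear_combination h1
    · field_simp; linear_combination -h0

lemma avoid_all {n : ℕ} (s : Finset (Fin n)) (v : Fin n → Fin 3 → ℂ)
    (hv : ∀ i ∈ s, v i ≠ 0) : ∃ ψ : Fin 3 → ℂ, ∀ i ∈ s, dot (v i) ψ ≠ 0 := by
  classical
  set p : Fin n → Polynomial ℂ := fun i =>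
    Polynomial.C (v i 0) + Polynomial.C (v i 1) * Polynomial.X +
      Polynomial.C (v i 2) * Polynomial.X ^ 2 with hp
  have hpne : ∀ i ∈ s, p i ≠ 0 := by
    intro i hi hzero
    have c0 : (p i).coeff 0 = v i 0 := by simp [hp]
    have c1 : (p i).coeff 1 = v i 1 := by simp [hp, Polynomial.coeff_X_pow]
    have c2 : (p i).coeff 2 = v i 2 := by simp [hp, Polynomial.coeff_X_pow]
    apply hv i hi
    funext k
    fin_cases k
    · show v i 0 = 0; rw [← c0, hzero]; simp
    · show v i 1 = 0; rw [← c1, hzero]; simp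
    · show v i 2 = 0; rw [← c2, hzero]; simp
  obtain ⟨t, ht⟩ := Infinite.exists_notMem_finset (s.biUnion fun i => (p i).roots.toFinset)
  refine ⟨![1, t, t ^ 2], fun i hi hdot => ?_⟩
  apply ht
  rw [Finset.mem_biUnion]
  refine ⟨i, hi, ?_⟩
  rw [Multiset.mem_toFinset, Polynomial.mem_roots (hpne i hi)]
  show Polynomial.eval t (p i) = 0
  rw [← hdot]
  simp [hp, dot]

lemma polarize {n : ℕ} (w : Fin n → ℂ) (v : Fin n → Fin 3 → ℂ)
    (h : ∀ P : Fin 3 → ℂ, ∑ i, w i * dot (v i) P ^ 3 = 0) (φ ψ τ : Fin 3 → ℂ) :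
    ∑ i, w i * (dot (v i) φ * dot (v i) ψ * dot (v i) τ) = 0 := by
  have h6 : (∑ i, w i * (dot (v i) φ * dot (v i) ψ * dot (v i) τ)) * 6 =
      (∑ i, w i * dot (v i) (φ + ψ + τ) ^ 3) - (∑ i, w i * dot (v i) (φ + ψ) ^ 3)
      - (∑ i, w i * dot (v i) (φ + τ) ^ 3) - (∑ i, w i * dot (v i) (ψ + τ) ^ 3)
      + (∑ i, w i * dot (v i) φ ^ 3) + (∑ i, w i * dot (v i) ψ ^ 3)
      + (∑ i, w i * dot (v i) τ ^ 3) := by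
    rw [Finset.sum_mul, ← Finset.sum_sub_distrib, ← Finset.sum_sub_distrib,
      ← Finset.sum_sub_distrib, ← Finset.sum_add_distrib, ← Finset.sum_add_distrib,
      ← Finset.sum_add_distrib]
    apply Finset.sum_congr rfl
    intro i _
    simp only [dot_add_right]
    ring
  rw [h (φ + ψ + τ), h (φ + ψ), h (φ + τ), h (ψ + τ), h φ, h ψ, h τ] at h6
  have h6' : (6 : ℂ) ≠ 0 := by norm_num
  simpa [h6'] using h6

lemma lin2 {u w : Fin 3 → ℂ} (hu : u ≠ 0) (hnp : ∀ t : ℂ, w ≠ t • u) {α β : ℂ}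
    (h : ∀ k : Fin 3, α * u k + β * w k = 0) : α = 0 := by
  have hβ : β = 0 := by
    by_contra hβ
    apply hnp (-α / β)
    funext k
    have := h k
    rw [Pi.smul_apply, smul_eq_mul, div_mul_eq_mul_div, eq_div_iff hβ]
    linear_combination this
  rcases ne_zero_coord hu with h0 | h0 | h0
  · have := h 0; rw [hβ] at this; simpa [h0] using this
  · have := h 1; rw [hβ] at this; simpa [h0] using this
  · have := h 2; rw [hβ] at this; simpa [h0] using this

lemma lin3 {x y z : Fin 3 → ℂ} (hdet : dot x (cross y z) ≠ 0) {α β γ : ℂ}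
    (h : ∀ k : Fin 3, α * x k + β * y k + γ * z k = 0) : α = 0 := by
  have key : α * dot x (cross y z) = 0 := by
    have e : α * dot x (cross y z) + β * dot y (cross y z) + γ * dot z (cross y z) = 0 := by
      simp only [dot]
      linear_combination (cross y z 0) * h 0 + (cross y z 1) * h 1 + (cross y z 2) * h 2
    rw [dot_cross_left, dot_cross_right] at e
    linear_combination e
  exact (mul_eq_zero.mp key).resolve_right hdet

lemma dep_of_det_eq_zero {p q r : Fin 3 → ℂ} (hpq : cross p q ≠ 0)
    (h : dot r (cross p q) = 0) : ∃ lam mu : ℂ, ∀ k, r k = lam * p k + mu * q k := by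
  have hd : p 0 * q 1 * r 2 - p 0 * q 2 * r 1 - p 1 * q 0 * r 2 + p 1 * q 2 * r 0
      + p 2 * q 0 * r 1 - p 2 * q 1 * r 0 = 0 := by
    simp [dot, cross] at h
    linear_combination h
  have key : ∀ lam mu : ℂ, r 0 = lam * p 0 + mu * q 0 → r 1 = lam * p 1 + mu * q 1 →
      r 2 = lam * p 2 + mu * q 2 → ∃ lam mu : ℂ, ∀ k, r k = lam * p k + mu * q k := by
    intro lam mu e0 e1 e2
    exact ⟨lam, mu, fun k => by fin_cases k <;> assumption⟩
  rcases ne_zero_coord hpq with hg | hg | hg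
  · simp only [cross, Matrix.cons_val_zero] at hg
    refine key ((r 1 * q 2 - r 2 * q 1) / (p 1 * q 2 - p 2 * q 1))
      ((p 1 * r 2 - p 2 * r 1) / (p 1 * q 2 - p 2 * q 1)) ?_ ?_ ?_
    · rw [div_mul_eq_mul_div, div_mul_eq_mul_div, ← add_div, eq_div_iff hg]; linear_combination hd
    · rw [div_mul_eq_mul_div, div_mul_eq_mul_div, ← add_div, eq_div_iff hg]; ring
    · rw [div_mul_eq_mul_div, div_mul_eq_mul_div, ← add_div, eq_div_iff hg]; ring
  · simp only [cross, Matrix.cons_val_one, Matrix.head_cons] at hg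
    have hg2 : p 2 * q 0 - p 0 * q 2 ≠ 0 := by simpa using hg
    refine key ((r 2 * q 0 - r 0 * q 2) / (p 2 * q 0 - p 0 * q 2))
      ((p 2 * r 0 - p 0 * r 2) / (p 2 * q 0 - p 0 * q 2)) ?_ ?_ ?_
    · rw [div_mul_eq_mul_div, div_mul_eq_mul_div, ← add_div, eq_div_iff hg2]; ring
    · rw [div_mul_eq_mul_div, div_mul_eq_mul_div, ← add_div, eq_div_iff hg2]; linear_combination hd
    · rw [div_mul_eq_mul_div, div_mul_eq_mul_div, ← add_div, eq_div_iff hg2]; ring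
  · have hg' : p 0 * q 1 - p 1 * q 0 ≠ 0 := by simpa [cross] using hg
    refine key ((r 0 * q 1 - r 1 * q 0) / (p 0 * q 1 - p 1 * q 0))
      ((p 0 * r 1 - p 1 * r 0) / (p 0 * q 1 - p 1 * q 0)) ?_ ?_ ?_
    · rw [div_mul_eq_mul_div, div_mul_eq_mul_div, ← add_div, eq_div_iff hg']; ring
    · rw [div_mul_eq_mul_div, div_mul_eq_mul_div, ← add_div, eq_div_iff hg']; ring
    · rw [div_mul_eq_mul_div, div_mul_eq_mul_div, ← add_div, eq_div_iff hg']; linear_combination hd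

lemma exists4 {n : ℕ} {s : Finset (Fin n)} (h : 4 ≤ s.card) :
    ∃ p ∈ s, ∃ q ∈ s, ∃ a ∈ s, ∃ b ∈ s,
      p ≠ q ∧ p ≠ a ∧ p ≠ b ∧ q ≠ a ∧ q ≠ b ∧ a ≠ b := by
  obtain ⟨p, hp⟩ := Finset.card_pos.mp (lt_of_lt_of_le (by norm_num) h)
  have h1 : 3 ≤ (s.erase p).card := by rw [Finset.card_erase_of_mem hp]; omega
  obtain ⟨q, hq⟩ := Finset.card_pos.mp (lt_of_lt_of_le (by norm_num) h1)
  have h2 : 2 ≤ ((s.erase p).erase q).card := by rw [Finset.card_erase_of_mem hq]; omega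
  obtain ⟨a, ha⟩ := Finset.card_pos.mp (lt_of_lt_of_le (by norm_num) h2)
  have h3 : 1 ≤ (((s.erase p).erase q).erase a).card := by rw [Finset.card_erase_of_mem ha]; omega
  obtain ⟨b, hb⟩ := Finset.card_pos.mp (lt_of_lt_of_le (by norm_num) h3)
  have has' := Finset.mem_of_mem_erase ha
  have hb1 := Finset.mem_of_mem_erase hb
  have hb2 := Finset.mem_of_mem_erase hb1
  exact ⟨p, hp, q, Finset.mem_of_mem_erase hq, a, Finset.mem_of_mem_erase has',
    b, Finset.mem_of_mem_erase hb2,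
    (Finset.ne_of_mem_erase hq).symm, (Finset.ne_of_mem_erase has').symm,
    (Finset.ne_of_mem_erase hb2).symm, (Finset.ne_of_mem_erase ha).symm,
    (Finset.ne_of_mem_erase hb1).symm, (Finset.ne_of_mem_erase hb).symm⟩


lemma sigma_ex {p1 p2 : ℂ} (hφ12 : p1 ≠ 0 ∨ p2 ≠ 0) {p0 A B E a b e : ℂ}
    (h1 : a * p0 + b * p1 + e * p2 = 0) (h2 : A * p0 + B * p1 + E * p2 = 0) :
    ∃ σ : ℂ, b * A = a * B + σ * p2 ∧ e * A = a * E - σ * p1 := by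
  rcases hφ12 with hp | hp
  · refine ⟨(a * E - e * A) / p1, ?_, by rw [div_mul_cancel₀ _ hp]; ring⟩
    rw [div_mul_eq_mul_div, add_div' _ _ _ hp, eq_div_iff hp]
    linear_combination A * h1 - a * h2
  · refine ⟨(b * A - a * B) / p2, by rw [div_mul_cancel₀ _ hp]; ring, ?_⟩
    rw [div_mul_eq_mul_div, sub_div' hp, eq_div_iff hp]
    linear_combination A * h1 - a * h2

lemma dot_vec (v : Fin 3 → ℂ) (x y z : ℂ) :
    dot v ![x, y, z] = v 0 * x + v 1 * y + v 2 * z := by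
  simp [dot]

lemma merge_sum {m : ℕ} (f g : Fin m → MvPolynomial (Fin 3) ℂ) {i j : Fin m} (hij : i ≠ j)
    (hg : ∀ k, k ≠ i → k ≠ j → g k = f k) (hsum2 : g i + g j = f i + f j) :
    ∑ k, g k = ∑ k, f k := by
  classical
  have key : ∀ h : Fin m → MvPolynomial (Fin 3) ℂ,
      ∑ k, h k = ∑ k ∈ (Finset.univ.erase j).erase i, h k + (h i + h j) := by
    intro h
    rw [← add_assoc, Finset.sum_erase_add _ _ (Finset.mem_erase.mpr ⟨hij, Finset.mem_univ i⟩),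
        Finset.sum_erase_add _ _ (Finset.mem_univ j)]
  rw [key f, key g, hsum2]
  congr 1
  refine Finset.sum_congr rfl fun k hk => ?_
  simp only [Finset.mem_erase] at hk
  exact hg k hk.1 hk.2.1

theorem no_small_decomp : ∀ n : ℕ, n ≤ 7 → ∀ (c : Fin n → ℂ) (v : Fin n → Fin 3 → ℂ),
    Fq ≠ ∑ i, c i • lf (v i) ^ 5 := by
  intro n
  induction n using Nat.strong_induction_on with
  | _ n IH =>
  intro hn c v hF
  classical
  rcases n with _ | m
  · simp only [Finset.univ_eq_empty, Finset.sum_empty] at hF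
    have h := congrArg (eval ![1, 1, 1]) hF
    simp [Fq] at h
    norm_num at h
  by_cases hz : ∃ j, c j • lf (v j) ^ 5 = 0
  · obtain ⟨j, hj⟩ := hz
    refine IH m (Nat.lt_succ_self m) (by omega)
      (fun i => c (j.succAbove i)) (fun i => v (j.succAbove i)) ?_
    rw [hF, Fin.sum_univ_succAbove _ j, hj, zero_add]
  by_cases hpar : ∃ i j, i ≠ j ∧ ∃ t : ℂ, v j = t • v i
  · obtain ⟨i, j, hij, t, ht⟩ := hpar
    set c' : Fin (m+1) → ℂ :=
      fun k => if k = j then 0 else if k = i then c i + c j * t ^ 5 else c k with hc'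
    have hsum : ∑ k, c' k • lf (v k) ^ 5 = ∑ k, c k • lf (v k) ^ 5 := by
      refine merge_sum _ _ hij (fun k hki hkj => by simp [hc', hki, hkj]) ?_
      have hvj : lf (v j) = t • lf (v i) := by rw [ht, lf_smul]
      have e1 : c' i = c i + c j * t ^ 5 := by simp [hc', hij]
      have e2 : c' j = 0 := by simp [hc']
      rw [e1, e2, zero_smul, add_zero, hvj, smul_pow, smul_smul, add_smul]
    have hzero : c' j • lf (v j) ^ 5 = 0 := by simp [hc']
    refine IH m (Nat.lt_succ_self m) (by omega)
      (fun k => c' (j.succAbove k)) (fun k => v (j.succAbove k)) ?_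
    rw [hF, ← hsum, Fin.sum_univ_succAbove _ j, hzero, zero_add]
  -- main case
  push_neg at hz hpar
  have hc : ∀ i, c i ≠ 0 := fun i h => hz i (by simp [h])
  have hv0 : ∀ i, v i ≠ 0 := fun i h => hz i (by simp [h, lf_zero])
  have hnp : ∀ i j, i ≠ j → ∀ t : ℂ, v j ≠ t • v i := fun i j hij t ht => hpar i j hij t ht
  have hcrossne : ∀ i j, i ≠ j → cross (v i) (v j) ≠ 0 := by
    intro i j hij h0
    obtain ⟨t, ht⟩ := parallel_of_cross_eq_zero h0 (hv0 i)
    exact hnp i j hij t ht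
  have e1 : pderiv 0 Fq = X 1 * X 2 ^ 3 := by
    have h2 : (2 : MvPolynomial (Fin 3) ℂ) = C 2 := (map_ofNat C 2).symm
    simp [Fq, pderiv_mul, pderiv_pow, h2, pderiv_C_mul]
    ring
  have hD1 : (X 1 * X 2 ^ 3 : MvPolynomial (Fin 3) ℂ)
      = ∑ i, C (5 * c i * v i 0) * lf (v i) ^ 4 := by
    rw [← e1, hF, map_sum]
    refine Finset.sum_congr rfl fun i _ => ?_
    rw [Derivation.map_smul, pderiv_pow, pderiv0_lf, smul_eq_C_mul]
    simp only [C_mul]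
    push_cast
    simp only [map_ofNat]
    ring
  have hD2 : (0 : MvPolynomial (Fin 3) ℂ) = ∑ i, C (20 * c i * v i 0 ^ 2) * lf (v i) ^ 3 := by
    have e2 : pderiv 0 (X 1 * X 2 ^ 3 : MvPolynomial (Fin 3) ℂ) = 0 := by
      simp [pderiv_mul]
    rw [← e2, hD1, map_sum]
    refine Finset.sum_congr rfl fun i _ => ?_
    rw [pderiv_C_mul, pderiv_pow, pderiv0_lf]
    simp only [C_mul, C_pow]
    push_cast
    simp only [map_ofNat]
    ring
  have hD1P : ∀ P : Fin 3 → ℂ, P 1 * P 2 ^ 3 = ∑ i, 5 * c i * v i 0 * dot (v i) P ^ 4 := by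
    intro P
    have h := congrArg (eval P) hD1
    simpa [map_sum, eval_lf] using h
  have hcube : ∀ P : Fin 3 → ℂ, ∑ i, c i * v i 0 ^ 2 * dot (v i) P ^ 3 = 0 := by
    intro P
    have h := congrArg (eval P) hD2
    simp [map_sum, eval_lf] at h
    rw [show (0:ℂ) = (1/20) * 0 by ring, h, Finset.mul_sum]
    exact Finset.sum_congr rfl fun i _ => by ring
  set S : Finset (Fin (m+1)) := Finset.univ.filter (fun i => v i 0 ≠ 0) with hSdef
  have hmemS : ∀ i, i ∈ S ↔ v i 0 ≠ 0 := by
    intro i; simp [hSdef]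
  have hS : S.Nonempty := by
    rw [Finset.nonempty_iff_ne_empty]
    intro hemp
    have hall : ∀ i, v i 0 = 0 := by
      intro i
      by_contra hi
      have hm : i ∈ S := (hmemS i).mpr hi
      simp [hemp] at hm
    have h1 := hD1P ![1, 1, 1]
    rw [Finset.sum_eq_zero (fun i _ => by rw [hall i]; ring)] at h1
    norm_num at h1
    simp at h1
  obtain ⟨i1, hi1⟩ := hS
  have hA : v i1 0 ≠ 0 := (hmemS i1).mp hi1
  by_cases hcop : ∃ φ : Fin 3 → ℂ, φ ≠ 0 ∧ ∀ i ∈ S, dot (v i) φ = 0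
  · -- collinear case
    obtain ⟨φ, hφne, hperp⟩ := hcop
    have hφ12 : φ 1 ≠ 0 ∨ φ 2 ≠ 0 := by
      by_contra hcon
      push_neg at hcon
      have h1 : dot (v i1) φ = 0 := hperp i1 hi1
      simp only [dot, hcon.1, hcon.2, mul_zero, add_zero] at h1
      have hφ0 : φ 0 = 0 := by
        rcases mul_eq_zero.mp h1 with h | h
        · exact absurd h hA
        · exact h
      exact hφne (funext fun k => by fin_cases k <;> simp [hφ0, hcon.1, hcon.2])
    have hsig : ∀ i, ∃ σ : ℂ, i ∈ S →
        (v i 1 * v i1 0 = v i 0 * v i1 1 + σ * φ 2 ∧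
         v i 2 * v i1 0 = v i 0 * v i1 2 - σ * φ 1) := by
      intro i
      by_cases hi : i ∈ S
      · have h1 : v i 0 * φ 0 + v i 1 * φ 1 + v i 2 * φ 2 = 0 := by
          have := hperp i hi; simpa [dot] using this
        have h2 : v i1 0 * φ 0 + v i1 1 * φ 1 + v i1 2 * φ 2 = 0 := by
          have := hperp i1 hi1; simpa [dot] using this
        obtain ⟨σ, hσ1, hσ2⟩ := sigma_ex hφ12 h1 h2
        exact ⟨σ, fun _ => ⟨hσ1, hσ2⟩⟩
      · exact ⟨0, fun h => absurd h hi⟩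
    choose σ hσ using hsig
    have key : ∀ Y Z : ℂ,
        (v i1 0 * Y) * (v i1 0 * Z) ^ 3
          = (∑ i, 5 * c i * v i 0 * σ i ^ 4) * (φ 2 * Y - φ 1 * Z) ^ 4 := by
      intro Y Z
      have h := hD1P ![-(v i1 1 * Y + v i1 2 * Z), v i1 0 * Y, v i1 0 * Z]
      have hP1 : (![-(v i1 1 * Y + v i1 2 * Z), v i1 0 * Y, v i1 0 * Z] : Fin 3 → ℂ) 1
          = v i1 0 * Y := rfl
      have hP2 : (![-(v i1 1 * Y + v i1 2 * Z), v i1 0 * Y, v i1 0 * Z] : Fin 3 → ℂ) 2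
          = v i1 0 * Z := rfl
      rw [hP1, hP2] at h
      rw [h, Finset.sum_mul]
      refine Finset.sum_congr rfl fun i _ => ?_
      by_cases hi : i ∈ S
      · have hdot : dot (v i) ![-(v i1 1 * Y + v i1 2 * Z), v i1 0 * Y, v i1 0 * Z]
            = σ i * (φ 2 * Y - φ 1 * Z) := by
          rw [dot_vec]
          linear_combination Y * (hσ i hi).1 + Z * (hσ i hi).2
        rw [hdot]; ring
      · have hz0 : v i 0 = 0 := by
          by_contra hcon; exact hi ((hmemS i).mpr hcon)
        rw [hz0]; ring
    have k10 := key 1 0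
    have k01 := key 0 1
    have k11 := key 1 1
    have hEc : (∑ i, 5 * c i * v i 0 * σ i ^ 4) ≠ 0 := by
      intro h
      rw [h, zero_mul] at k11
      have h4 : (v i1 0) ^ 4 = 0 := by linear_combination k11
      exact hA (pow_eq_zero_iff (by norm_num) |>.mp h4)
    have hφ2 : φ 2 = 0 := by
      have h0 : (∑ i, 5 * c i * v i 0 * σ i ^ 4) * (φ 2) ^ 4 = 0 := by
        linear_combination -k10
      rcases mul_eq_zero.mp h0 with h | h
      · exact absurd h hEc
      · exact pow_eq_zero_iff (by norm_num) |>.mp h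
    have hφ1 : φ 1 = 0 := by
      have h0 : (∑ i, 5 * c i * v i 0 * σ i ^ 4) * (φ 1) ^ 4 = 0 := by
        linear_combination -k01
      rcases mul_eq_zero.mp h0 with h | h
      · exact absurd h hEc
      · exact pow_eq_zero_iff (by norm_num) |>.mp h
    rcases hφ12 with h | h
    · exact h hφ1
    · exact h hφ2
  · -- non-coplanar case
    push_neg at hcop
    set w : Fin (m+1) → ℂ := fun i => c i * v i 0 ^ 2 with hwdef
    have hwS : ∀ i, i ∈ S → w i ≠ 0 := by
      intro i hi
      exact mul_ne_zero (hc i) (pow_ne_zero _ ((hmemS i).mp hi))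
    have hw0 : ∀ i, i ∉ S → w i = 0 := by
      intro i hi
      have hvi : v i 0 = 0 := by by_contra hcon; exact hi ((hmemS i).mpr hcon)
      simp [hwdef, hvi]
    have hpol := polarize w v hcube
    set off : (Fin 3 → ℂ) → Finset (Fin (m+1)) :=
      fun φ => S.filter (fun i => dot (v i) φ ≠ 0) with hoffdef
    set U : (Fin 3 → ℂ) → (Fin 3 → ℂ) → Finset (Fin (m+1)) :=
      fun φ ψ => S.filter (fun i => dot (v i) φ ≠ 0 ∧ dot (v i) ψ ≠ 0) with hUdef
    have hmemU : ∀ φ ψ i, i ∈ U φ ψ ↔ i ∈ S ∧ dot (v i) φ ≠ 0 ∧ dot (v i) ψ ≠ 0 := by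
      intro φ ψ i; simp [hUdef]
    have hmemoff : ∀ φ i, i ∈ off φ ↔ i ∈ S ∧ dot (v i) φ ≠ 0 := by
      intro φ i; simp [hoffdef]
    have hred : ∀ φ ψ τ, ∑ i ∈ U φ ψ,
        w i * (dot (v i) φ * dot (v i) ψ * dot (v i) τ) = 0 := by
      intro φ ψ τ
      rw [← hpol φ ψ τ]
      refine Finset.sum_subset (Finset.subset_univ _) fun i _ hiU => ?_
      by_cases hi : i ∈ S
      · by_cases h1 : dot (v i) φ = 0
        · rw [h1]; ring
        · have h2 : dot (v i) ψ = 0 := by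
            by_contra h2
            exact hiU ((hmemU φ ψ i).mpr ⟨hi, h1, h2⟩)
          rw [h2]; ring
      · rw [hw0 i hi]; ring
    have hkill1 : ∀ φ ψ (x : Fin (m+1)), U φ ψ = {x} → False := by
      intro φ ψ x hU
      have hx := (hmemU φ ψ x).mp (hU ▸ Finset.mem_singleton_self x)
      have hne := mul_ne_zero (hwS x hx.1) (mul_ne_zero hx.2.1 hx.2.2)
      have hvx : v x = 0 := by
        funext k
        have hr := hred φ ψ (ek k)
        rw [hU, Finset.sum_singleton, dot_ek] at hr
        have h0 : w x * (dot (v x) φ * dot (v x) ψ) * v x k = 0 := by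
          linear_combination hr
        rcases mul_eq_zero.mp h0 with h | h
        · exact absurd h hne
        · exact h
      exact hv0 x hvx
    have hkill2 : ∀ φ ψ (x y : Fin (m+1)), x ≠ y → U φ ψ = {x, y} → False := by
      intro φ ψ x y hxy hU
      have hx := (hmemU φ ψ x).mp (hU ▸ Finset.mem_insert_self x {y})
      have hrel : ∀ k : Fin 3,
          (w x * (dot (v x) φ * dot (v x) ψ)) * v x k
          + (w y * (dot (v y) φ * dot (v y) ψ)) * v y k = 0 := by
        intro k
        have hr := hred φ ψ (ek k)
        rw [hU, Finset.sum_pair hxy, dot_ek, dot_ek] at hr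
        linear_combination hr
      have h0 := lin2 (hv0 x) (hnp x y hxy) hrel
      exact mul_ne_zero (hwS x hx.1) (mul_ne_zero hx.2.1 hx.2.2) h0
    have hkill3 : ∀ φ ψ (x y z : Fin (m+1)), x ≠ y → x ≠ z → y ≠ z →
        dot (v x) (cross (v y) (v z)) ≠ 0 → U φ ψ = {x, y, z} → False := by
      intro φ ψ x y z hxy hxz hyz hdet hU
      have hx := (hmemU φ ψ x).mp (hU ▸ Finset.mem_insert_self x {y, z})
      have hrel : ∀ k : Fin 3,
          (w x * (dot (v x) φ * dot (v x) ψ)) * v x k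
          + (w y * (dot (v y) φ * dot (v y) ψ)) * v y k
          + (w z * (dot (v z) φ * dot (v z) ψ)) * v z k = 0 := by
        intro k
        have hr := hred φ ψ (ek k)
        rw [hU, Finset.sum_insert (by simp [hxy, hxz]), Finset.sum_pair hyz,
          dot_ek, dot_ek, dot_ek] at hr
        linear_combination hr
      have h0 := lin3 hdet hrel
      exact mul_ne_zero (hwS x hx.1) (mul_ne_zero hx.2.1 hx.2.2) h0
    have hoffne : ∀ φ : Fin 3 → ℂ, φ ≠ 0 → (off φ).Nonempty := by
      intro φ hφ
      obtain ⟨i, hi, hd⟩ := hcop φ hφ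
      exact ⟨i, (hmemoff φ i).mpr ⟨hi, hd⟩⟩
    by_cases hC1 : ∃ φ : Fin 3 → ℂ, (off φ).card = 1 ∨ (off φ).card = 2
    · obtain ⟨φ, hcard⟩ := hC1
      obtain ⟨ψ, hψ⟩ := avoid_all S v (fun i _ => hv0 i)
      have hUoff : U φ ψ = off φ := by
        ext i
        rw [hmemU, hmemoff]
        exact ⟨fun ⟨h1, h2, _⟩ => ⟨h1, h2⟩, fun ⟨h1, h2⟩ => ⟨h1, h2, hψ i h1⟩⟩
      rcases hcard with h1 | h2
      · obtain ⟨x, hx⟩ := Finset.card_eq_one.mp h1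
        exact hkill1 φ ψ x (hUoff.trans hx)
      · obtain ⟨x, y, hxy, hset⟩ := Finset.card_eq_two.mp h2
        exact hkill2 φ ψ x y hxy (hUoff.trans hset)
    by_cases hC2 : ∃ φ : Fin 3 → ℂ, (off φ).card = 3
    · obtain ⟨φ, hcard⟩ := hC2
      obtain ⟨p, q, r, hpq, hpr, hqr, hset⟩ := Finset.card_eq_three.mp hcard
      have hpoff := (hmemoff φ p).mp (hset ▸ Finset.mem_insert_self p {q, r})
      have hqoff := (hmemoff φ q).mp
        (hset ▸ Finset.mem_insert_of_mem (Finset.mem_insert_self q {r}))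
      have hroff := (hmemoff φ r).mp
        (hset ▸ Finset.mem_insert_of_mem (Finset.mem_insert_of_mem (Finset.mem_singleton_self r)))
      by_cases hdep : dot (v r) (cross (v p) (v q)) = 0
      · obtain ⟨k, hk⟩ : ∃ k : Fin 3, cross (v p) (v q) k ≠ 0 := by
          rcases ne_zero_coord (hcrossne p q hpq) with h | h | h
          exacts [⟨0, h⟩, ⟨1, h⟩, ⟨2, h⟩]
        set ψ : Fin 3 → ℂ := cross (v p) (ek k) with hψdef
        have hψp : dot (v p) ψ = 0 := dot_cross_left _ _
        have hψq : dot (v q) ψ ≠ 0 := by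
          rw [hψdef, dot_cross_ek]
          simpa using hk
        obtain ⟨lam, mu, hcomb⟩ := dep_of_det_eq_zero (hcrossne p q hpq) hdep
        have hmu : mu ≠ 0 := by
          intro hmu0
          apply hnp p r hpr lam
          funext k'
          rw [Pi.smul_apply, smul_eq_mul]
          have hck := hcomb k'
          rw [hmu0, zero_mul, add_zero] at hck
          exact hck
        have hψr : dot (v r) ψ ≠ 0 := by
          have hexp : dot (v r) ψ = lam * dot (v p) ψ + mu * dot (v q) ψ := by
            simp only [dot, hcomb 0, hcomb 1, hcomb 2]
            ring
          rw [hexp, hψp, mul_zero, zero_add]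
          exact mul_ne_zero hmu hψq
        have hU : U φ ψ = {q, r} := by
          ext i
          rw [hmemU]
          simp only [Finset.mem_insert, Finset.mem_singleton]
          constructor
          · rintro ⟨hiS, hiφ, hiψ⟩
            have hioff : i ∈ ({p, q, r} : Finset (Fin (m+1))) :=
              hset ▸ (hmemoff φ i).mpr ⟨hiS, hiφ⟩
            simp only [Finset.mem_insert, Finset.mem_singleton] at hioff
            rcases hioff with rfl | rfl | rfl
            · exact absurd hψp hiψ
            · exact Or.inl rfl
            · exact Or.inr rfl
          · rintro (rfl | rfl)
            · exact ⟨hqoff.1, hqoff.2, hψq⟩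
            · exact ⟨hroff.1, hroff.2, hψr⟩
        exact hkill2 φ ψ q r hqr hU
      · obtain ⟨ψ, hψ⟩ := avoid_all S v (fun i _ => hv0 i)
        have hUoff : U φ ψ = off φ := by
          ext i
          rw [hmemU, hmemoff]
          exact ⟨fun ⟨h1, h2, _⟩ => ⟨h1, h2⟩, fun ⟨h1, h2⟩ => ⟨h1, h2, hψ i h1⟩⟩
        have hset' : U φ ψ = {r, p, q} := by
          rw [hUoff, hset]
          ext i
          simp only [Finset.mem_insert, Finset.mem_singleton]
          tauto
        exact hkill3 φ ψ r p q (Ne.symm hpr) (Ne.symm hqr) hpq hdep hset'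
    push_neg at hC1 hC2
    have hoff4 : ∀ φ : Fin 3 → ℂ, φ ≠ 0 → 4 ≤ (off φ).card := by
      intro φ hφ
      have h1 : 1 ≤ (off φ).card := Finset.card_pos.mpr (hoffne φ hφ)
      have h2 := hC1 φ
      have h3 := hC2 φ
      omega
    have hScard : S.card ≤ 7 := by
      calc S.card ≤ (Finset.univ : Finset (Fin (m+1))).card := Finset.card_le_univ S
      _ = m + 1 := by simp
      _ ≤ 7 := hn
    by_cases hdt : ∃ p ∈ S, ∃ q ∈ S, ∃ r ∈ S, p ≠ q ∧ p ≠ r ∧ q ≠ r ∧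
        dot (v r) (cross (v p) (v q)) = 0
    · obtain ⟨p, hpS, q, hqS, r, hrS, hpq, hpr, hqr, hdep⟩ := hdt
      set φ : Fin 3 → ℂ := cross (v p) (v q) with hφdef
      have hφne : φ ≠ 0 := hcrossne p q hpq
      have hsub : off φ ⊆ S \ {p, q, r} := by
        intro i hi
        rw [hmemoff] at hi
        rw [Finset.mem_sdiff]
        refine ⟨hi.1, ?_⟩
        simp only [Finset.mem_insert, Finset.mem_singleton]
        push_neg
        refine ⟨?_, ?_, ?_⟩
        · rintro rfl; exact hi.2 (dot_cross_left _ _)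
        · rintro rfl; exact hi.2 (dot_cross_right _ _)
        · rintro rfl; exact hi.2 hdep
      have hcard3 : ({p, q, r} : Finset (Fin (m+1))).card = 3 := by
        rw [Finset.card_insert_of_notMem (by simp [hpq, hpr]),
          Finset.card_insert_of_notMem (by simp [hqr]), Finset.card_singleton]
      have hsubcard : (off φ).card ≤ S.card - 3 := by
        calc (off φ).card ≤ (S \ {p, q, r}).card := Finset.card_le_card hsub
        _ = S.card - 3 := by
          rw [Finset.card_sdiff_of_subset (by
            intro i hi
            simp only [Finset.mem_insert, Finset.mem_singleton] at hi
            rcases hi with rfl | rfl | rfl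
            exacts [hpS, hqS, hrS]), hcard3]
      have hoffcard : (off φ).card = 4 := by
        have h4 := hoff4 φ hφne
        omega
      obtain ⟨x, hxoff, y, hyoff, hxy⟩ := Finset.one_lt_card.mp
        (show 1 < (off φ).card by omega)
      set ψ : Fin 3 → ℂ := cross (v x) (v y) with hψdef
      have hψne : ψ ≠ 0 := hcrossne x y hxy
      have hUsub : U φ ψ ⊆ (off φ) \ {x, y} := by
        intro i hi
        rw [hmemU] at hi
        rw [Finset.mem_sdiff]
        refine ⟨(hmemoff φ i).mpr ⟨hi.1, hi.2.1⟩, ?_⟩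
        simp only [Finset.mem_insert, Finset.mem_singleton]
        push_neg
        constructor
        · rintro rfl; exact hi.2.2 (dot_cross_left _ _)
        · rintro rfl; exact hi.2.2 (dot_cross_right _ _)
      have hUcard2 : (U φ ψ).card ≤ 2 := by
        have hxy2 : ({x, y} : Finset (Fin (m+1))).card = 2 := by
          rw [Finset.card_insert_of_notMem (by simp [hxy]), Finset.card_singleton]
        calc (U φ ψ).card ≤ ((off φ) \ {x, y}).card := Finset.card_le_card hUsub
        _ = (off φ).card - 2 := by
          rw [Finset.card_sdiff_of_subset (by
            intro i hi
            simp only [Finset.mem_insert, Finset.mem_singleton] at hi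
            rcases hi with rfl | rfl
            exacts [hxoff, hyoff]), hxy2]
        _ ≤ 2 := by omega
      have hUcard1 : 1 ≤ (U φ ψ).card := by
        have hinter : U φ ψ = off φ ∩ off ψ := by
          ext i
          rw [hmemU]
          simp only [Finset.mem_inter, hmemoff]
          tauto
        have hsd : (off φ \ off ψ).card ≤ 3 := by
          have hsub2 : off φ \ off ψ ⊆ S \ off ψ := by
            intro i hi
            rw [Finset.mem_sdiff] at hi ⊢
            exact ⟨((hmemoff φ i).mp hi.1).1, hi.2⟩
          have hoffsubS : off ψ ⊆ S := fun i hi => ((hmemoff ψ i).mp hi).1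
          calc (off φ \ off ψ).card ≤ (S \ off ψ).card := Finset.card_le_card hsub2
          _ = S.card - (off ψ).card := Finset.card_sdiff_of_subset hoffsubS
          _ ≤ 3 := by
            have h4 := hoff4 ψ hψne
            omega
        have hiden := Finset.card_sdiff_add_card_inter (off φ) (off ψ)
        rw [hinter]
        omega
      have hUor : (U φ ψ).card = 1 ∨ (U φ ψ).card = 2 := by omega
      rcases hUor with h1 | h2
      · obtain ⟨x', hx'⟩ := Finset.card_eq_one.mp h1
        exact hkill1 φ ψ x' hx'
      · obtain ⟨x', y', hxy', hset'⟩ := Finset.card_eq_two.mp h2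
        exact hkill2 φ ψ x' y' hxy' hset'
    · push_neg at hdt
      have hS4 : 4 ≤ S.card := by
        have hek : (ek 0 : Fin 3 → ℂ) ≠ 0 := by
          intro h
          have h0 := congrFun h 0
          simp [ek] at h0
        have hsub : off (ek 0) ⊆ S := fun i hi => ((hmemoff _ i).mp hi).1
        calc 4 ≤ (off (ek 0)).card := hoff4 _ hek
        _ ≤ S.card := Finset.card_le_card hsub
      obtain ⟨p, hpS, q, hqS, a, haS, b, hbS, hpq, hpa, hpb, hqa, hqb, hab⟩ := exists4 hS4
      set φ : Fin 3 → ℂ := cross (v p) (v q) with hφdef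
      set ψ : Fin 3 → ℂ := cross (v a) (v b) with hψdef
      have hUeq : U φ ψ = S \ {p, q, a, b} := by
        ext i
        rw [hmemU, Finset.mem_sdiff]
        simp only [Finset.mem_insert, Finset.mem_singleton]
        constructor
        · rintro ⟨hiS, hiφ, hiψ⟩
          refine ⟨hiS, ?_⟩
          push_neg
          refine ⟨?_, ?_, ?_, ?_⟩
          · rintro rfl; exact hiφ (dot_cross_left _ _)
          · rintro rfl; exact hiφ (dot_cross_right _ _)
          · rintro rfl; exact hiψ (dot_cross_left _ _)
          · rintro rfl; exact hiψ (dot_cross_right _ _)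
        · rintro ⟨hiS, hi⟩
          push_neg at hi
          obtain ⟨hip, hiq, hia, hib⟩ := hi
          exact ⟨hiS, hdt p hpS q hqS i hiS hpq (Ne.symm hip) (Ne.symm hiq),
            hdt a haS b hbS i hiS hab (Ne.symm hia) (Ne.symm hib)⟩
      have hS6 : 6 ≤ S.card := by
        have hφne : φ ≠ 0 := hcrossne p q hpq
        have hsub : off φ ⊆ S \ {p, q} := by
          intro i hi
          rw [hmemoff] at hi
          rw [Finset.mem_sdiff]
          refine ⟨hi.1, ?_⟩
          simp only [Finset.mem_insert, Finset.mem_singleton]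
          push_neg
          constructor
          · rintro rfl; exact hi.2 (dot_cross_left _ _)
          · rintro rfl; exact hi.2 (dot_cross_right _ _)
        have hpq2 : ({p, q} : Finset (Fin (m+1))).card = 2 := by
          rw [Finset.card_insert_of_notMem (by simp [hpq]), Finset.card_singleton]
        have h4 := hoff4 φ hφne
        have hc2 : (off φ).card ≤ S.card - 2 := by
          calc (off φ).card ≤ (S \ {p, q}).card := Finset.card_le_card hsub
          _ = S.card - 2 := by
            rw [Finset.card_sdiff_of_subset (by
              intro i hi
              simp only [Finset.mem_insert, Finset.mem_singleton] at hi
              rcases hi with rfl | rfl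
              exacts [hpS, hqS]), hpq2]
        omega
      have hsub4 : ({p, q, a, b} : Finset (Fin (m+1))) ⊆ S := by
        intro i hi
        simp only [Finset.mem_insert, Finset.mem_singleton] at hi
        rcases hi with rfl | rfl | rfl | rfl
        exacts [hpS, hqS, haS, hbS]
      have hcard4 : ({p, q, a, b} : Finset (Fin (m+1))).card = 4 := by
        rw [Finset.card_insert_of_notMem (by simp [hpq, hpa, hpb]),
          Finset.card_insert_of_notMem (by simp [hqa, hqb]),
          Finset.card_insert_of_notMem (by simp [hab]), Finset.card_singleton]
      have hUcard : (U φ ψ).card = S.card - 4 := by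
        rw [hUeq, Finset.card_sdiff_of_subset hsub4, hcard4]
      have hUor : (U φ ψ).card = 2 ∨ (U φ ψ).card = 3 := by omega
      rcases hUor with h2 | h3
      · obtain ⟨x', y', hxy', hset'⟩ := Finset.card_eq_two.mp h2
        exact hkill2 φ ψ x' y' hxy' hset'
      · obtain ⟨x', y', z', hxy', hxz', hyz', hset'⟩ := Finset.card_eq_three.mp h3
        have hx'S := ((hmemU φ ψ x').mp (hset' ▸ Finset.mem_insert_self x' {y', z'})).1
        have hy'S := ((hmemU φ ψ y').mp
          (hset' ▸ Finset.mem_insert_of_mem (Finset.mem_insert_self y' {z'}))).1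
        have hz'S := ((hmemU φ ψ z').mp
          (hset' ▸ Finset.mem_insert_of_mem
            (Finset.mem_insert_of_mem (Finset.mem_singleton_self z')))).1
        exact hkill3 φ ψ x' y' z' hxy' hxz' hyz'
          (hdt y' hy'S z' hz'S x' hx'S hyz' (Ne.symm hxy') (Ne.symm hxz')) hset'



noncomputable def cs : Fin 8 → ℂ :=
  ![-1/240, 1/240, 1/480, -1/480, 1/800, -1/800, -1/1200, 1/1200]

noncomputable def vs : Fin 8 → Fin 3 → ℂ :=
  ![![1,-1,1], ![1,-1,-1], ![1,-1,2], ![1,-1,-2], ![-1,3,2], ![-1,3,-2], ![-1,3,3], ![-1,3,-3]]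

set_option maxHeartbeats 3200000 in
lemma upper_bound : Fq = ∑ i, cs i • lf (vs i) ^ 5 := by
  have h48 : (C (4800:ℂ) : MvPolynomial (Fin 3) ℂ) ≠ 0 := by simp
  apply mul_left_cancel₀ h48
  simp only [Fin.sum_univ_succ, Fin.sum_univ_zero, cs, vs, Fq, lf,
    Matrix.cons_val_zero, Matrix.cons_val_one, Matrix.head_cons, Matrix.cons_val_succ,
    smul_eq_C_mul, add_zero]
  simp only [mul_sub, mul_add, ← mul_assoc, ← C_mul]
  norm_num
  simp only [map_ofNat]
  ring

end W15

/-- The ternary quintic `xyz³ − 2y²z³ − (1/5)z⁵` has Waring rank exactly 8. -/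
theorem stmt15 :
    waringRank 5
      (X 0 * X 1 * X 2 ^ 3 - 2 * X 1 ^ 2 * X 2 ^ 3 - C (1/5 : ℂ) * X 2 ^ 5 :
        MvPolynomial (Fin 3) ℂ) = 8 := by
  have hFq : (X 0 * X 1 * X 2 ^ 3 - 2 * X 1 ^ 2 * X 2 ^ 3 - C (1/5 : ℂ) * X 2 ^ 5 :
      MvPolynomial (Fin 3) ℂ) = W15.Fq := rfl
  rw [waringRank, hFq]
  have h8 : 8 ∈ {r : ℕ | ∃ (c : Fin r → ℂ) (v : Fin r → Fin 3 → ℂ),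
      W15.Fq = ∑ i, c i • (∑ j, v i j • MvPolynomial.X j) ^ 5} :=
    ⟨W15.cs, W15.vs, W15.upper_bound⟩
  apply le_antisymm
  · exact Nat.sInf_le h8
  · refine le_csInf ⟨8, h8⟩ ?_
    rintro r ⟨c, v, hF⟩
    by_contra hlt
    push_neg at hlt
    exact W15.no_small_decomp r (by omega) c v hF
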